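/- Let K be a field with char(K) > 3, a, b ∈ K, and let A, B, C be points on the affine curve y² = x³ + ax + b with pairwise distinct x-coordinates, such that also the points A+B and B+C (computed by the chord formula) have x-coordinates distinct from x_C and x_A respectively, and A+B ≠ -C, B+C ≠ -A. Then (A+B)+C = A+(B+C), where + is given by the chord formula: for P = (x_P,y_P), Q = (x_Q,y_Q) with x_P ≠ x_Q, P+Q = (α² - x_P - x_Q, -y_P + α(x_P - (α² - x_P - x_Q))) with α = (y_P - y_Q)/(x_P - x_Q). -/

import Mathlib

/-- The chord construction: sum of two affine points with distinct x-coordinates. -/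
def chord {K : Type*} [Field K] (P Q : K × K) : K × K :=
  let α := (P.2 - Q.2) / (P.1 - Q.1)
  let x := α ^ 2 - P.1 - Q.1
  (x, -P.2 + α * (P.1 - x))

open WeierstrassCurve.Affine WeierstrassCurve.Affine.Point in
theorem chord_assoc {K : Type*} [Field K] (h2 : (2 : K) ≠ 0) (h3 : (3 : K) ≠ 0)
    (a b : K) (A B C : K × K)
    (hA : A.2 ^ 2 = A.1 ^ 3 + a * A.1 + b)
    (hB : B.2 ^ 2 = B.1 ^ 3 + a * B.1 + b)
    (hC : C.2 ^ 2 = C.1 ^ 3 + a * C.1 + b)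
    (hAB : A.1 ≠ B.1) (hBC : B.1 ≠ C.1) (hAC : A.1 ≠ C.1)
    (hABC : (chord A B).1 ≠ C.1) (hBCA : (chord B C).1 ≠ A.1)
    (hABnC : chord A B ≠ (C.1, -C.2)) (hBCnA : chord B C ≠ (A.1, -A.2)) :
    chord (chord A B) C = chord A (chord B C) := by
  classical
  set W : WeierstrassCurve.Affine K := ⟨0, 0, 0, a, b⟩ with hW
  -- basic translations
  have heq : ∀ x y : K, y ^ 2 = x ^ 3 + a * x + b → W.Equation x y := by
    intro x y hP
    rw [equation_iff]
    simp only [hW]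
    linear_combination hP
  have heq' : ∀ x y : K, W.Equation x y → y ^ 2 = x ^ 3 + a * x + b := by
    intro x y h
    rw [equation_iff] at h
    simp only [hW] at h
    linear_combination h
  -- the bridge between `chord` and mathlib's addition formulas
  have bridge : ∀ P Q : K × K, P.1 ≠ Q.1 →
      chord P Q = (W.addX P.1 Q.1 (W.slope P.1 Q.1 P.2 Q.2),
        W.addY P.1 Q.1 P.2 (W.slope P.1 Q.1 P.2 Q.2)) := by
    intro P Q hx
    simp only [chord, slope_of_X_ne hx, addX, addY, negAddY, negY, hW, Prod.mk.injEq]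
    constructor <;> ring
  -- data of a singular point
  have sing_data : ∀ x y : K, y ^ 2 = x ^ 3 + a * x + b → ¬ W.Nonsingular x y →
      3 * x ^ 2 + a = 0 ∧ y = 0 := by
    intro x y hxy hs
    rw [nonsingular_iff'] at hs
    push_neg at hs
    obtain ⟨hs1, hs2⟩ := hs (heq x y hxy)
    simp only [hW] at hs1 hs2
    constructor
    · linear_combination -hs1
    · have h2y : 2 * y = 0 := by linear_combination hs2
      rcases mul_eq_zero.mp h2y with h | h
      · exact absurd h h2
      · exact h
  -- collapse lemmas at a singular point (p, 0)
  have collapse : ∀ p : K, p ^ 3 + a * p + b = 0 → 3 * p ^ 2 + a = 0 →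
      ∀ P : K × K, P.2 ^ 2 = P.1 ^ 3 + a * P.1 + b → P.1 ≠ p →
      chord (p, 0) P = (p, 0) ∧ chord P (p, 0) = (p, 0) := by
    intro p hb ha P hP hx
    have hxp : P.1 - p ≠ 0 := sub_ne_zero.mpr hx
    have key : ((P.2 - 0) / (P.1 - p)) ^ 2 = P.1 + 2 * p := by
      rw [div_pow, div_eq_iff (pow_ne_zero 2 hxp)]
      linear_combination hP + hb + (P.1 - p) * ha
    have key' : ((0 - P.2) / (p - P.1)) ^ 2 = P.1 + 2 * p := by
      rw [show (0 - P.2) / (p - P.1) = (P.2 - 0) / (P.1 - p) by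
        rw [div_eq_div_iff (sub_ne_zero.mpr (Ne.symm hx)) hxp]; ring]
      exact key
    constructor
    · simp only [chord, Prod.mk.injEq]
      constructor
      · rw [key']; ring
      · rw [key']; ring
    · simp only [chord, Prod.mk.injEq]
      have hy : (P.2 - 0) / (P.1 - p) * (P.1 - p) = P.2 := by
        field_simp
        ring
      constructor
      · rw [key]; ring
      · rw [key]
        calc -P.2 + (P.2 - 0) / (P.1 - p) * (P.1 - (P.1 + 2 * p - P.1 - p))
            = -P.2 + (P.2 - 0) / (P.1 - p) * (P.1 - p) := by ring_nf
          _ = 0 := by rw [hy]; ring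
  -- case: B is singular
  by_cases sB : W.Nonsingular B.1 B.2
  case neg =>
    obtain ⟨ha, hy⟩ := sing_data B.1 B.2 hB sB
    have hbb : B.1 ^ 3 + a * B.1 + b = 0 := by
      have h := hB; rw [hy] at h; linear_combination -h
    have hBpt : B = (B.1, (0 : K)) := by rw [← hy]
    have e1 : chord A B = B := by
      have h := (collapse B.1 hbb ha A hA hAB).2
      rwa [← hBpt] at h
    have e2 : chord B C = B := by
      have h := (collapse B.1 hbb ha C hC (Ne.symm hBC)).1
      rwa [← hBpt] at h
    rw [e1, e2]; exact e1.symm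
  case pos =>
  -- case: A is singular
  by_cases sA : W.Nonsingular A.1 A.2
  case neg =>
    obtain ⟨ha, hy⟩ := sing_data A.1 A.2 hA sA
    have hbb : A.1 ^ 3 + a * A.1 + b = 0 := by
      have h := hA; rw [hy] at h; linear_combination -h
    have hApt : A = (A.1, (0 : K)) := by rw [← hy]
    have e1 : chord A B = A := by
      have h := (collapse A.1 hbb ha B hB (Ne.symm hAB)).1
      rwa [← hApt] at h
    -- chord B C lies on the curve
    have hD : (chord B C).2 ^ 2 = (chord B C).1 ^ 3 + a * (chord B C).1 + b := by
      by_cases sC : W.Nonsingular C.1 C.2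
      · have n3 := nonsingular_add sB sC (fun h => absurd h.1 hBC)
        rw [bridge B C hBC]
        exact heq' _ _ n3.1
      · obtain ⟨ha', hy'⟩ := sing_data C.1 C.2 hC sC
        have hbb' : C.1 ^ 3 + a * C.1 + b = 0 := by
          have h := hC; rw [hy'] at h; linear_combination -h
        have hCpt : C = (C.1, (0 : K)) := by rw [← hy']
        have hc : chord B C = C := by
          have h := (collapse C.1 hbb' ha' B hB hBC).2
          rwa [← hCpt] at h
        rw [hc, hC]
    have eL : chord A C = A := by
      have h := (collapse A.1 hbb ha C hC (Ne.symm hAC)).1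
      rwa [← hApt] at h
    have eR : chord A (chord B C) = A := by
      have h := (collapse A.1 hbb ha (chord B C) hD
        (fun h => hBCA (by rw [h]))).1
      rwa [← hApt] at h
    rw [e1, eL, eR]
  case pos =>
  -- case: C is singular
  by_cases sC : W.Nonsingular C.1 C.2
  case neg =>
    obtain ⟨ha, hy⟩ := sing_data C.1 C.2 hC sC
    have hbb : C.1 ^ 3 + a * C.1 + b = 0 := by
      have h := hC; rw [hy] at h; linear_combination -h
    have hCpt : C = (C.1, (0 : K)) := by rw [← hy]
    have e2 : chord B C = C := by
      have h := (collapse C.1 hbb ha B hB hBC).2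
      rwa [← hCpt] at h
    -- chord A B lies on the curve
    have hE : (chord A B).2 ^ 2 = (chord A B).1 ^ 3 + a * (chord A B).1 + b := by
      have n3 := nonsingular_add sA sB (fun h => absurd h.1 hAB)
      rw [bridge A B hAB]
      exact heq' _ _ n3.1
    have eL : chord (chord A B) C = C := by
      have h := (collapse C.1 hbb ha (chord A B) hE
        (fun h => hABC (by rw [h]))).2
      rwa [← hCpt] at h
    have eR : chord A C = C := by
      have h := (collapse C.1 hbb ha A hA hAC).2
      rwa [← hCpt] at h
    rw [e2, eL, eR]
  case pos =>
  -- main case: all three points nonsingular; use mathlib's group law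
  have e1 := bridge A B hAB
  have e2 := bridge B C hBC
  have hx1 : W.addX A.1 B.1 (W.slope A.1 B.1 A.2 B.2) ≠ C.1 := by
    have h := hABC; rw [e1] at h; exact h
  have hx2 : A.1 ≠ W.addX B.1 C.1 (W.slope B.1 C.1 B.2 C.2) := by
    have h := hBCA; rw [e2] at h; exact (Ne.symm h)
  have p1 := add_of_X_ne (h₁ := sA) (h₂ := sB) hAB
  have p2 := add_of_X_ne (h₁ := nonsingular_add sA sB (fun h => absurd h.1 hAB))
    (h₂ := sC) hx1
  have p3 := add_of_X_ne (h₁ := sB) (h₂ := sC) hBC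
  have p4 := add_of_X_ne (h₁ := sA)
    (h₂ := nonsingular_add sB sC (fun h => absurd h.1 hBC)) hx2
  have assoc := add_assoc (WeierstrassCurve.Affine.Point.some _ _ sA) (WeierstrassCurve.Affine.Point.some _ _ sB) (WeierstrassCurve.Affine.Point.some _ _ sC)
  rw [p1, p2, p3, p4] at assoc
  rw [e1, e2, bridge _ C hx1, bridge A _ hx2]
  injection assoc with h1 h2
  rw [h1, h2]
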